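/- Let c : [0,∞) → ℝ be differentiable with c′ convex, let 0 < q₀ ≤ q₁, suppose c is twice differentiable at q₀ with c′′(q₀) > 0, and set v = c′(q₁). Then ∫_{q₀}^{q₁} (v − c′(s)) ds ≤ (v − c′(q₀))² / (2·c′′(q₀)). -/
import Mathlib

open Real Set

/-- For a cost function `c` with convex marginal cost `cd = c'`, if `0 < q₀ ≤ q₁`,
`cd` has derivative `d > 0` at `q₀`, and `v = cd q₁`, then the efficiency loss from
stopping at `q₀` satisfies `∫_{q₀}^{q₁} (v - cd s) ds ≤ (v - cd q₀) ^ 2 / (2 * d)`. -/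
theorem stmt_10 (c cd : ℝ → ℝ)
    (hderiv : ∀ q ∈ Set.Ici (0 : ℝ), HasDerivAt c (cd q) q)
    (hconv : ConvexOn ℝ (Set.Ici 0) cd)
    (q₀ q₁ d v : ℝ) (hq₀ : 0 < q₀) (hq₀₁ : q₀ ≤ q₁)
    (hderiv2 : HasDerivAt cd d q₀) (hd : 0 < d)
    (hv : v = cd q₁) :
    ∫ s in q₀..q₁, (v - cd s) ≤ (v - cd q₀) ^ 2 / (2 * d) := by
  -- tangent line bound
  have htan : ∀ s ∈ Set.Icc q₀ q₁, v - cd s ≤ (v - cd q₀) - d * (s - q₀) := by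
    intro s hs
    rcases eq_or_lt_of_le hs.1 with rfl | hlt
    · simp
    · have hmem0 : q₀ ∈ Set.Ici (0:ℝ) := le_of_lt hq₀
      have hmems : s ∈ Set.Ici (0:ℝ) := le_trans hq₀.le hs.1
      have := hconv.le_slope_of_hasDerivAt hmem0 hmems hlt hderiv2
      rw [slope_def_field] at this
      have h' : d * (s - q₀) ≤ cd s - cd q₀ := by
        have hpos : 0 < s - q₀ := sub_pos.mpr hlt
        calc d * (s - q₀) ≤ (cd s - cd q₀) / (s - q₀) * (s - q₀) := by
              exact mul_le_mul_of_nonneg_right this hpos.le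
          _ = cd s - cd q₀ := div_mul_cancel₀ _ hpos.ne'
      linarith
  -- continuity of cd on [q₀, q₁]
  have hsub : Set.Icc q₀ q₁ ⊆ interior (Set.Ici (0:ℝ)) := by
    rw [interior_Ici]
    intro x hx
    exact lt_of_lt_of_le hq₀ hx.1
  have hcont : ContinuousOn cd (Set.Icc q₀ q₁) :=
    (hconv.continuousOn_interior).mono hsub
  have hint1 : IntervalIntegrable (fun s => v - cd s) MeasureTheory.volume q₀ q₁ := by
    apply ContinuousOn.intervalIntegrable
    rw [Set.uIcc_of_le hq₀₁]
    exact continuousOn_const.sub hcont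
  have hint2 : IntervalIntegrable (fun s => (v - cd q₀) - d * (s - q₀))
      MeasureTheory.volume q₀ q₁ := by
    apply Continuous.intervalIntegrable
    continuity
  have hmono : ∫ s in q₀..q₁, (v - cd s) ≤
      ∫ s in q₀..q₁, ((v - cd q₀) - d * (s - q₀)) := by
    apply intervalIntegral.integral_mono_on hq₀₁ hint1 hint2
    exact htan
  refine hmono.trans ?_
  have hval : ∫ s in q₀..q₁, ((v - cd q₀) - d * (s - q₀)) =
      (v - cd q₀) * (q₁ - q₀) - d * (q₁ - q₀)^2 / 2 := by
    have : ∀ s : ℝ, (v - cd q₀) - d * (s - q₀) =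
        (v - cd q₀ + d * q₀) - d * s := by intro s; ring
    simp only [this]
    rw [intervalIntegral.integral_sub (by apply Continuous.intervalIntegrable; continuity)
      (by apply Continuous.intervalIntegrable; continuity)]
    rw [intervalIntegral.integral_const, intervalIntegral.integral_const_mul,
      integral_id]
    simp only [smul_eq_mul]
    ring
  rw [hval, le_div_iff₀ (by linarith : (0:ℝ) < 2 * d)]
  nlinarith [sq_nonneg (d * (q₁ - q₀) - (v - cd q₀))]
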